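/- Given two n-simplices a, b whose union x = a ∪ b is an (n+k)-simplex, there exists a subset U ⊆ {0,...,n+k} of cardinality 2k with {a, b} = {d_{U^0}(x), d_{U^1}(x)} if and only if the function ind : (a∖b) ∪ (b∖a) → ℤ/2 defined by ind(v) = pos_x(v) + pos_{(a∖b)∪(b∖a)}(v) mod 2 is constant on a∖b and on b∖a with different values on the two sets; moreover such U, if it exists, is unique and equals pos_x((a∖b) ∪ (b∖a)) shifted to 0-based positions. -/

import Mathlib

open scoped TensorProduct

def posIn (S : Finset ℕ) (u : ℕ) : ℕ := (S.filter (fun v => v ≤ u)).card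
def idxFun (U : Finset ℕ) (u : ℕ) : ℕ := (u + posIn U u) % 2
def part0 (U : Finset ℕ) : Finset ℕ := U.filter (fun u => idxFun U u = 0)
def part1 (U : Finset ℕ) : Finset ℕ := U.filter (fun u => idxFun U u = 1)

variable {V : Type} [LinearOrder V]

/-- `dFace U x` deletes from the simplex `x` the vertices in (0-based) positions `U`. -/
def dFace (U : Finset ℕ) (x : Finset V) : Finset V :=
  ((((x.sort (· ≤ ·)).zipIdx.map Prod.swap).filter (fun p => decide (p.1 ∉ U))).map Prod.snd).toFinset

/-- Mod 2 simplicial chains: the free `𝔽₂`-module on simplices (finite subsets of `V`). -/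
abbrev Chains (V : Type) [LinearOrder V] := Finset V →₀ ZMod 2


noncomputable instance {V : Type} [LinearOrder V] :
    Zero (TensorProduct (ZMod 2) (Chains V) (Chains V)) :=
  (inferInstance : AddCommMonoid (TensorProduct (ZMod 2) (Chains V) (Chains V))).toAddMonoid.toZero

/-- Basis chain corresponding to a simplex. -/
noncomputable def eC (x : Finset V) : Chains V := Finsupp.single x 1

/-- The cup-`i` coproduct on a basis simplex. -/
noncomputable def deltaSimplex (i : ℤ) (x : Finset V) :
    TensorProduct (ZMod 2) (Chains V) (Chains V) :=
  if 0 ≤ i ∧ i ≤ (x.card : ℤ) - 1 then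
    ∑ U ∈ Finset.powersetCard (x.card - 1 - i.toNat) (Finset.range x.card),
      eC (dFace (part0 U) x) ⊗ₜ[ZMod 2] eC (dFace (part1 U) x)
  else (0 : TensorProduct (ZMod 2) (Chains V) (Chains V))

/-- The cup-`i` coproduct `Δᵢ`, as a linear map on chains. -/
noncomputable def deltaMap (V : Type) [LinearOrder V] (i : ℤ) :
    Chains V →ₗ[ZMod 2] TensorProduct (ZMod 2) (Chains V) (Chains V) :=
  Finsupp.lift _ (ZMod 2) (Finset V) (deltaSimplex i)

/-- Mod 2 boundary of a basis simplex. -/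
noncomputable def bdSimplex (x : Finset V) : Chains V :=
  if 2 ≤ x.card then ∑ i ∈ Finset.range x.card, eC (dFace {i} x) else 0

/-- Mod 2 simplicial boundary `∂ = Σ dᵢ`. -/
noncomputable def bdMap (V : Type) [LinearOrder V] : Chains V →ₗ[ZMod 2] Chains V :=
  Finsupp.lift _ (ZMod 2) (Finset V) bdSimplex

/-- Boundary on the tensor product: `∂(a⊗b) = ∂a⊗b + a⊗∂b` (signs trivial mod 2). -/
noncomputable def bdT (V : Type) [LinearOrder V] :
    TensorProduct (ZMod 2) (Chains V) (Chains V) →ₗ[ZMod 2]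
      TensorProduct (ZMod 2) (Chains V) (Chains V) :=
  TensorProduct.map (bdMap V) LinearMap.id + TensorProduct.map LinearMap.id (bdMap V)

/-- Transposition of tensor factors `T(a⊗b) = b⊗a`. -/
noncomputable def transp (V : Type) [LinearOrder V] :
    TensorProduct (ZMod 2) (Chains V) (Chains V) →ₗ[ZMod 2]
      TensorProduct (ZMod 2) (Chains V) (Chains V) :=
  (TensorProduct.comm (ZMod 2) (Chains V) (Chains V)).toLinearMap

/-- Chain map induced by a simplicial (monotone) map `f`. -/
noncomputable def fChain {W : Type} [LinearOrder W] (f : V → W) :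
    Chains V →ₗ[ZMod 2] Chains W :=
  Finsupp.lift _ (ZMod 2) (Finset V)
    (fun x => if (x.image f).card = x.card then eC (x.image f) else 0)

/-- Evaluation of a cochain on chains. -/
noncomputable def evalCochain (α : Finset V → ZMod 2) : Chains V →ₗ[ZMod 2] ZMod 2 :=
  Finsupp.lift _ (ZMod 2) (Finset V) α

/-- Evaluation of a tensor of cochains on a tensor of chains. -/
noncomputable def pairing (α β : Finset V → ZMod 2) :
    TensorProduct (ZMod 2) (Chains V) (Chains V) →ₗ[ZMod 2] ZMod 2 :=
  (LinearMap.mul' (ZMod 2) (ZMod 2)) ∘ₗ TensorProduct.map (evalCochain α) (evalCochain β)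

/-- Indicator cochain of a single simplex. -/
def indC (a : Finset V) : Finset V → ZMod 2 := fun y => if y = a then 1 else 0

/-- 1-based position of `v` in the totally ordered finite set `S`. -/
def posV {V : Type} [LinearOrder V] (S : Finset V) (v : V) : ℕ :=
  (S.filter (fun w => w ≤ v)).card

/-- The index `ind(v) = pos_x(v) + pos_s(v) mod 2` from the algorithm. -/
def indComb {V : Type} [LinearOrder V] (x s : Finset V) (v : V) : ℕ :=
  (posV x v + posV s v) % 2

section Support
variable {V : Type} [LinearOrder V]

lemma count_le_sorted : ∀ (l : List V), l.Pairwise (· < ·) →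
    ∀ i (h : i < l.length), (l.filter (fun w => decide (w ≤ l[i]))).length = i + 1 := by
  intro l hl
  induction l with
  | nil => intro i h; simp at h
  | cons a t ih =>
    intro i h
    rcases List.pairwise_cons.1 hl with ⟨ha, ht⟩
    cases i with
    | zero =>
      simp only [List.getElem_cons_zero, List.filter_cons, le_refl]
      rw [List.filter_eq_nil_iff.2 (by intro w hw; simpa using not_le.2 (ha w hw))]
      simp
    | succ j =>
      have hj : j < t.length := by simpa using h
      simp only [List.getElem_cons_succ, List.filter_cons]
      have : a ≤ t[j] := (ha _ (t.getElem_mem hj)).le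
      simp [this, ih ht j hj]

lemma length_filter_sort (x : Finset V) (p : V → Prop) [DecidablePred p] :
    ((x.sort (· ≤ ·)).filter (fun w => decide (p w))).length = (x.filter p).card := by
  rw [← List.countP_eq_length_filter, (Finset.sort_perm_toList x _).countP_eq,
    ← Multiset.coe_countP, Finset.coe_toList, Multiset.countP_eq_card_filter,
    ← Finset.filter_val, Finset.card]

lemma posV_getElem (x : Finset V) (i : ℕ) (h : i < (x.sort (· ≤ ·)).length) :
    posV x ((x.sort (· ≤ ·))[i]) = i + 1 := by
  rw [posV, ← length_filter_sort, count_le_sorted _ (List.sortedLT_iff_pairwise.1 (Finset.sortedLT_sort x)) i h]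

lemma mem_dFace {U : Finset ℕ} {x : Finset V} {v : V} :
    v ∈ dFace U x ↔ v ∈ x ∧ posV x v - 1 ∉ U := by
  set l := x.sort (· ≤ ·) with hl
  constructor
  · intro hv
    simp only [dFace, List.mem_toFinset, List.mem_map, List.mem_filter] at hv
    obtain ⟨⟨i, w⟩, ⟨hmem, hiU⟩, hw⟩ := hv
    subst hw
    obtain ⟨⟨w', i'⟩, hmem, he⟩ := hmem
    simp only [Prod.swap_prod_mk, Prod.mk.injEq] at he
    obtain ⟨h1, h2⟩ := he
    subst i' w'
    rw [List.mk_mem_zipIdx_iff_getElem?] at hmem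
    have hi : i < l.length := by
      by_contra h'
      rw [List.getElem?_eq_none (le_of_not_gt h')] at hmem; simp at hmem
    rw [List.getElem?_eq_getElem hi] at hmem
    have hv' : l[i] = w := by injection hmem
    have hpos : posV x w = i + 1 := by rw [← hv']; exact posV_getElem x i hi
    refine ⟨?_, ?_⟩
    · rw [← Finset.mem_sort (· ≤ ·), ← hl, ← hv']; exact l.getElem_mem hi
    · rw [hpos]; simpa using hiU
  · rintro ⟨hvx, hU⟩
    have hvl : v ∈ l := by rw [hl, Finset.mem_sort]; exact hvx
    obtain ⟨i, hi, hv'⟩ := List.mem_iff_getElem.1 hvl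
    have hpos : posV x v = i + 1 := by rw [← hv']; exact posV_getElem x i hi
    simp only [dFace, List.mem_toFinset, List.mem_map, List.mem_filter]
    refine ⟨(i, v), ⟨?_, by simpa [hpos] using hU⟩, rfl⟩
    exact ⟨(v, i), by rw [List.mk_mem_zipIdx_iff_getElem?, List.getElem?_eq_getElem hi, hv'], rfl⟩

lemma dFace_eq_filter (U : Finset ℕ) (x : Finset V) :
    dFace U x = x.filter (fun v => posV x v - 1 ∉ U) := by
  ext v; rw [mem_dFace, Finset.mem_filter]

variable {x : Finset V} {v w : V}

lemma posV_lt (hw : w ∈ x) (hvw : v < w) : posV x v < posV x w := by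
  refine Finset.card_lt_card ?_
  rw [Finset.ssubset_iff_of_subset (Finset.monotone_filter_right _ ?_)]
  · exact ⟨w, by simp [hw], by simp [not_le.2 hvw]⟩
  · intro u _ hu; exact le_trans hu hvw.le

lemma posV_le_iff (hv : v ∈ x) (hw : w ∈ x) : posV x v ≤ posV x w ↔ v ≤ w := by
  constructor
  · intro h; by_contra h'
    exact absurd (posV_lt hv (not_le.1 h')) (not_lt.2 h)
  · intro h
    rcases eq_or_lt_of_le h with rfl | h'
    · exact le_rfl
    · exact (posV_lt hw h').le

lemma posV_injOn (hv : v ∈ x) (hw : w ∈ x) (h : posV x v = posV x w) : v = w :=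
  le_antisymm ((posV_le_iff hv hw).1 h.le) ((posV_le_iff hw hv).1 h.ge)

lemma posV_pos (hv : v ∈ x) : 1 ≤ posV x v :=
  Finset.card_pos.2 ⟨v, by simp [posV, hv]⟩

lemma posV_le_card : posV x v ≤ x.card := Finset.card_le_card (Finset.filter_subset _ _)

lemma f_injOn : Set.InjOn (fun v => posV x v - 1) x := by
  intro v hv w hw h
  have h' : posV x v - 1 = posV x w - 1 := h
  exact posV_injOn hv hw (by have := posV_pos (x := x) hv; have := posV_pos (x := x) hw; omega)

lemma image_f_eq_range : x.image (fun v => posV x v - 1) = Finset.range x.card := by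
  apply Finset.eq_of_subset_of_card_le
  · intro u hu
    obtain ⟨v, hv, rfl⟩ := Finset.mem_image.1 hu
    have h1 := posV_pos hv
    have h2 := posV_le_card (x := x) (v := v)
    simp only [Finset.mem_range]; omega
  · rw [Finset.card_range, Finset.card_image_of_injOn f_injOn]

lemma f_le_iff (hv : v ∈ x) (hw : w ∈ x) :
    posV x v - 1 ≤ posV x w - 1 ↔ v ≤ w := by
  rw [← posV_le_iff hv hw]
  have := posV_pos hv; have := posV_pos hw; omega

lemma posIn_image {s : Finset V} (hs : s ⊆ x) (hv : v ∈ s) :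
    posIn (s.image (fun v => posV x v - 1)) (posV x v - 1) = posV s v := by
  rw [posIn]
  have : (s.image (fun v => posV x v - 1)).filter (fun u => u ≤ posV x v - 1)
      = (s.filter (fun w => w ≤ v)).image (fun v => posV x v - 1) := by
    ext u
    simp only [Finset.mem_filter, Finset.mem_image]
    constructor
    · rintro ⟨⟨w, hw, rfl⟩, hle⟩
      exact ⟨w, ⟨hw, (f_le_iff (hs hw) (hs hv)).1 hle⟩, rfl⟩
    · rintro ⟨w, ⟨hw, hle⟩, rfl⟩
      exact ⟨⟨w, hw, rfl⟩, (f_le_iff (hs hw) (hs hv)).2 hle⟩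
  rw [this, Finset.card_image_of_injOn (f_injOn.mono ?_), posV]
  intro u hu
  exact hs (Finset.mem_filter.1 hu).1

lemma part0_union_part1 (U : Finset ℕ) : part0 U ∪ part1 U = U := by
  ext u
  simp only [part0, part1, Finset.mem_union, Finset.mem_filter]
  rcases Nat.mod_two_eq_zero_or_one (u + posIn U u) with h | h <;> simp [idxFun, h]

end Support

/-- correctness criterion of the algorithm. Given `n`-simplices `a ≠ b`
whose union `x = a ∪ b` is an `(n+k)`-simplex, a set `U ⊆ {0,…,n+k}` of cardinality
`2k` with `{a,b} = {d_{U^0}(x), d_{U^1}(x)}` exists iff the index function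
`ind(v) = pos_x(v) + pos_{(a∖b)∪(b∖a)}(v) mod 2` is constant on `a∖b` and on `b∖a`
with different values; moreover such `U` is unique and equals the set of 0-based
positions in `x` of `(a∖b) ∪ (b∖a)`. -/
theorem stmt_18 {V : Type} [LinearOrder V] (n k : ℕ) (hk1 : 1 ≤ k) (hk2 : k ≤ n)
    (a b x : Finset V) (ha : a.card = n + 1) (hb : b.card = n + 1) (hab : a ≠ b)
    (hx : x = a ∪ b) (hxc : x.card = n + k + 1) :
    ((∃ U ⊆ Finset.range (n + k + 1), U.card = 2 * k ∧
        ((dFace (part0 U) x = a ∧ dFace (part1 U) x = b) ∨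
         (dFace (part0 U) x = b ∧ dFace (part1 U) x = a)))
      ↔ ((∀ v ∈ a \ b, ∀ w ∈ a \ b,
            indComb x ((a \ b) ∪ (b \ a)) v = indComb x ((a \ b) ∪ (b \ a)) w) ∧
         (∀ v ∈ b \ a, ∀ w ∈ b \ a,
            indComb x ((a \ b) ∪ (b \ a)) v = indComb x ((a \ b) ∪ (b \ a)) w) ∧
         (∀ v ∈ a \ b, ∀ w ∈ b \ a,
            indComb x ((a \ b) ∪ (b \ a)) v ≠ indComb x ((a \ b) ∪ (b \ a)) w)))
    ∧ (∀ U ⊆ Finset.range (n + k + 1), U.card = 2 * k →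
        ((dFace (part0 U) x = a ∧ dFace (part1 U) x = b) ∨
         (dFace (part0 U) x = b ∧ dFace (part1 U) x = a)) →
        U = ((a \ b) ∪ (b \ a)).image (fun v => posV x v - 1)) := by
  set s : Finset V := (a \ b) ∪ (b \ a) with hs
  set P : Finset ℕ := s.image (fun v => posV x v - 1) with hPdef
  have hax : a ⊆ x := hx ▸ Finset.subset_union_left
  have hbx : b ⊆ x := hx ▸ Finset.subset_union_right
  have hsx : s ⊆ x := Finset.union_subset
    (Finset.sdiff_subset.trans hax) (Finset.sdiff_subset.trans hbx)
  have hcap : (a ∩ b).card = n + 1 - k := by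
    have h := Finset.card_union_add_card_inter a b
    rw [← hx, hxc, ha, hb] at h; omega
  have habc : (a \ b).card = k := by
    have h := Finset.card_inter_add_card_sdiff a b
    rw [ha, hcap] at h; omega
  have hbac : (b \ a).card = k := by
    have h := Finset.card_inter_add_card_sdiff b a
    rw [hb, Finset.inter_comm, hcap] at h; omega
  have hdisj : Disjoint (a \ b) (b \ a) := disjoint_sdiff_sdiff
  have hscard : s.card = 2 * k := by
    rw [hs, Finset.card_union_of_disjoint hdisj, habc, hbac]; omega
  have hXA : x \ (b \ a) = a := by
    ext v; simp only [Finset.mem_sdiff, hx, Finset.mem_union]; tauto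
  have hXB : x \ (a \ b) = b := by
    ext v; simp only [Finset.mem_sdiff, hx, Finset.mem_union]; tauto
  have hrange : Finset.range (n + k + 1) = x.image (fun v => posV x v - 1) := by
    rw [image_f_eq_range, hxc]
  -- membership characterizations
  have hfP : ∀ v ∈ x, ((posV x v - 1) ∈ P ↔ v ∈ s) := by
    intro v hv
    constructor
    · intro h
      obtain ⟨w, hw, hw'⟩ := Finset.mem_image.1 h
      exact (f_injOn (hsx hw) hv hw') ▸ hw
    · intro h; exact Finset.mem_image_of_mem _ h
  have hidx0 : ∀ v ∈ s, (idxFun P (posV x v - 1) = 0 ↔ indComb x s v = 1) := by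
    intro v hv
    have h1 := posV_pos (hsx hv)
    rw [idxFun, hPdef, posIn_image hsx hv, indComb]
    omega
  have hidx1 : ∀ v ∈ s, (idxFun P (posV x v - 1) = 1 ↔ indComb x s v = 0) := by
    intro v hv
    have h1 := posV_pos (hsx hv)
    rw [idxFun, hPdef, posIn_image hsx hv, indComb]
    omega
  have key0 : ∀ v ∈ x, ((posV x v - 1) ∈ part0 P ↔ v ∈ s ∧ indComb x s v = 1) := by
    intro v hv
    simp only [part0, Finset.mem_filter]
    constructor
    · rintro ⟨h1, h2⟩
      have hvs := (hfP v hv).1 h1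
      exact ⟨hvs, (hidx0 v hvs).1 h2⟩
    · rintro ⟨h1, h2⟩
      exact ⟨(hfP v hv).2 h1, (hidx0 v h1).2 h2⟩
  have key1 : ∀ v ∈ x, ((posV x v - 1) ∈ part1 P ↔ v ∈ s ∧ indComb x s v = 0) := by
    intro v hv
    simp only [part1, Finset.mem_filter]
    constructor
    · rintro ⟨h1, h2⟩
      have hvs := (hfP v hv).1 h1
      exact ⟨hvs, (hidx1 v hvs).1 h2⟩
    · rintro ⟨h1, h2⟩
      exact ⟨(hfP v hv).2 h1, (hidx1 v h1).2 h2⟩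
  have dFace0 : dFace (part0 P) x = x \ (s.filter fun v => indComb x s v = 1) := by
    rw [dFace_eq_filter]
    ext v
    simp only [Finset.mem_filter, Finset.mem_sdiff]
    constructor
    · rintro ⟨h1, h2⟩
      exact ⟨h1, fun hc => h2 ((key0 v h1).2 hc)⟩
    · rintro ⟨h1, h2⟩
      exact ⟨h1, fun hc => h2 ((key0 v h1).1 hc)⟩
  have dFace1 : dFace (part1 P) x = x \ (s.filter fun v => indComb x s v = 0) := by
    rw [dFace_eq_filter]
    ext v
    simp only [Finset.mem_filter, Finset.mem_sdiff]
    constructor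
    · rintro ⟨h1, h2⟩
      exact ⟨h1, fun hc => h2 ((key1 v h1).2 hc)⟩
    · rintro ⟨h1, h2⟩
      exact ⟨h1, fun hc => h2 ((key1 v h1).1 hc)⟩
  -- the partial inverse lemma
  have epart : ∀ W : Finset ℕ, W ⊆ Finset.range (n + k + 1) → ∀ c : Finset V, c ⊆ x →
      dFace W x = x \ c → W = c.image (fun v => posV x v - 1) := by
    intro W hW c hc hface
    rw [dFace_eq_filter] at hface
    have hiff : ∀ v ∈ x, ((posV x v - 1) ∈ W ↔ v ∈ c) := by
      intro v hv
      have h1 : v ∈ x.filter (fun v => posV x v - 1 ∉ W) ↔ v ∈ x \ c := by rw [hface]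
      simp only [Finset.mem_filter, Finset.mem_sdiff] at h1
      constructor
      · intro h; by_contra hc'
        exact (h1.2 ⟨hv, hc'⟩).2 h
      · intro h; by_contra hc'
        exact (h1.1 ⟨hv, hc'⟩).2 h
    ext u
    constructor
    · intro hu
      obtain ⟨v, hv, rfl⟩ := Finset.mem_image.1 (hrange ▸ hW hu)
      exact Finset.mem_image_of_mem _ ((hiff v hv).1 hu)
    · intro hu
      obtain ⟨v, hv, rfl⟩ := Finset.mem_image.1 hu
      exact (hiff v (hc hv)).2 hv
  -- uniqueness
  have main : ∀ U ⊆ Finset.range (n + k + 1), U.card = 2 * k →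
      ((dFace (part0 U) x = a ∧ dFace (part1 U) x = b) ∨
       (dFace (part0 U) x = b ∧ dFace (part1 U) x = a)) → U = P := by
    intro U hUsub hUcard hor
    have h0sub : part0 U ⊆ Finset.range (n + k + 1) :=
      (Finset.filter_subset _ _).trans hUsub
    have h1sub : part1 U ⊆ Finset.range (n + k + 1) :=
      (Finset.filter_subset _ _).trans hUsub
    rcases hor with ⟨h0, h1⟩ | ⟨h0, h1⟩
    · have e0 := epart (part0 U) h0sub (b \ a) (Finset.sdiff_subset.trans hbx) (by rw [h0, hXA])
      have e1 := epart (part1 U) h1sub (a \ b) (Finset.sdiff_subset.trans hax) (by rw [h1, hXB])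
      rw [← part0_union_part1 U, e0, e1, ← Finset.image_union, hPdef, hs, Finset.union_comm]
    · have e0 := epart (part0 U) h0sub (a \ b) (Finset.sdiff_subset.trans hax) (by rw [h0, hXB])
      have e1 := epart (part1 U) h1sub (b \ a) (Finset.sdiff_subset.trans hbx) (by rw [h1, hXA])
      rw [← part0_union_part1 U, e0, e1, ← Finset.image_union, hPdef, hs]
  have cancel : ∀ c d : Finset V, c ⊆ x → d ⊆ x → x \ c = x \ d → c = d := by
    intro c d hc hd h
    rw [← Finset.sdiff_sdiff_eq_self hc, h, Finset.sdiff_sdiff_eq_self hd]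
  constructor
  · constructor
    · -- forward
      rintro ⟨U, hUsub, hUcard, hor⟩
      have hUP := main U hUsub hUcard hor
      subst hUP
      rcases hor with ⟨h0, h1⟩ | ⟨h0, h1⟩
      · have e1 : s.filter (fun v => indComb x s v = 1) = b \ a :=
          cancel _ _ ((Finset.filter_subset _ _).trans hsx)
            (Finset.sdiff_subset.trans hbx) (by rw [← dFace0, h0]; exact hXA.symm)
        have e0 : s.filter (fun v => indComb x s v = 0) = a \ b :=
          cancel _ _ ((Finset.filter_subset _ _).trans hsx)
            (Finset.sdiff_subset.trans hax) (by rw [← dFace1, h1]; exact hXB.symm)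
        have hA : ∀ v ∈ a \ b, indComb x s v = 0 := by
          intro v hv; rw [← e0] at hv; exact (Finset.mem_filter.1 hv).2
        have hB : ∀ v ∈ b \ a, indComb x s v = 1 := by
          intro v hv; rw [← e1] at hv; exact (Finset.mem_filter.1 hv).2
        exact ⟨fun v hv w hw => by rw [hA v hv, hA w hw],
               fun v hv w hw => by rw [hB v hv, hB w hw],
               fun v hv w hw => by rw [hA v hv, hB w hw]; omega⟩
      · have e1 : s.filter (fun v => indComb x s v = 1) = a \ b :=
          cancel _ _ ((Finset.filter_subset _ _).trans hsx)
            (Finset.sdiff_subset.trans hax) (by rw [← dFace0, h0]; exact hXB.symm)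
        have e0 : s.filter (fun v => indComb x s v = 0) = b \ a :=
          cancel _ _ ((Finset.filter_subset _ _).trans hsx)
            (Finset.sdiff_subset.trans hbx) (by rw [← dFace1, h1]; exact hXA.symm)
        have hA : ∀ v ∈ a \ b, indComb x s v = 1 := by
          intro v hv; rw [← e1] at hv; exact (Finset.mem_filter.1 hv).2
        have hB : ∀ v ∈ b \ a, indComb x s v = 0 := by
          intro v hv; rw [← e0] at hv; exact (Finset.mem_filter.1 hv).2
        exact ⟨fun v hv w hw => by rw [hA v hv, hA w hw],
               fun v hv w hw => by rw [hB v hv, hB w hw],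
               fun v hv w hw => by rw [hA v hv, hB w hw]; omega⟩
    · -- backward
      rintro ⟨hcA, hcB, hne⟩
      obtain ⟨v0, hv0⟩ := Finset.card_pos.1 (by rw [habc]; omega : 0 < (a \ b).card)
      obtain ⟨w0, hw0⟩ := Finset.card_pos.1 (by rw [hbac]; omega : 0 < (b \ a).card)
      have hclt : indComb x s v0 < 2 := Nat.mod_lt _ (by omega)
      have hdlt : indComb x s w0 < 2 := Nat.mod_lt _ (by omega)
      have hcd : indComb x s v0 ≠ indComb x s w0 := hne v0 hv0 w0 hw0
      refine ⟨P, ?_, ?_, ?_⟩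
      · rw [hrange, hPdef]; exact Finset.image_subset_image hsx
      · rw [hPdef, Finset.card_image_of_injOn (f_injOn.mono hsx), hscard]
      · have hmemA : ∀ v ∈ a \ b, v ∈ s := fun v hv => Finset.mem_union_left _ hv
        have hmemB : ∀ v ∈ b \ a, v ∈ s := fun v hv => Finset.mem_union_right _ hv
        rcases (by omega : indComb x s v0 = 0 ∨ indComb x s v0 = 1) with hc0 | hc1
        · -- ind = 0 on a\b, = 1 on b\a
          have hd1 : indComb x s w0 = 1 := by omega
          have hf1 : s.filter (fun v => indComb x s v = 1) = b \ a := by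
            ext v
            simp only [Finset.mem_filter, hs, Finset.mem_union]
            constructor
            · rintro ⟨hv | hv, h2⟩
              · rw [hcA v hv v0 hv0, hc0] at h2; omega
              · exact hv
            · intro hv
              exact ⟨Or.inr hv, by rw [hcB v hv w0 hw0, hd1]⟩
          have hf0 : s.filter (fun v => indComb x s v = 0) = a \ b := by
            ext v
            simp only [Finset.mem_filter, hs, Finset.mem_union]
            constructor
            · rintro ⟨hv | hv, h2⟩
              · exact hv
              · rw [hcB v hv w0 hw0, hd1] at h2; omega
            · intro hv
              exact ⟨Or.inl hv, by rw [hcA v hv v0 hv0, hc0]⟩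
          left
          rw [dFace0, dFace1, hf1, hf0, hXA, hXB]
          exact ⟨rfl, rfl⟩
        · have hd0 : indComb x s w0 = 0 := by omega
          have hf1 : s.filter (fun v => indComb x s v = 1) = a \ b := by
            ext v
            simp only [Finset.mem_filter, hs, Finset.mem_union]
            constructor
            · rintro ⟨hv | hv, h2⟩
              · exact hv
              · rw [hcB v hv w0 hw0, hd0] at h2; omega
            · intro hv
              exact ⟨Or.inl hv, by rw [hcA v hv v0 hv0, hc1]⟩
          have hf0 : s.filter (fun v => indComb x s v = 0) = b \ a := by
            ext v
            simp only [Finset.mem_filter, hs, Finset.mem_union]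
            constructor
            · rintro ⟨hv | hv, h2⟩
              · rw [hcA v hv v0 hv0, hc1] at h2; omega
              · exact hv
            · intro hv
              exact ⟨Or.inr hv, by rw [hcB v hv w0 hw0, hd0]⟩
          right
          rw [dFace0, dFace1, hf1, hf0, hXA, hXB]
          exact ⟨rfl, rfl⟩
  · exact main
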